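/- Let $(\alpha,\beta)$ be a connected component of the open set $\{t>0 : Y(t)>0\}$, where $Y$ is the finite pointwise limit of the pathwise $\varepsilon$-approximations driven by a path $g$ which is locally H\"older continuous of order $H/2$ for some $H\in(0,1/2)$. Then $\lim_{t\to\alpha+} Y(t) = 0$ and $\lim_{t\to\beta-} Y(t) = 0$. -/

import Mathlib

open Filter Topology MeasureTheory Set

/-- Intermediate value type lemma: a continuous function starting below `c₁` and ending
above `c₂` has a final crossing of `c₁` followed by a first crossing of `c₂`, staying
in `[c₁, c₂]` in between. -/
lemma crossing_up {f : ℝ → ℝ} (hf : Continuous f) {p q c₁ c₂ : ℝ}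
    (hpq : p ≤ q) (hc : c₁ < c₂) (hp : f p < c₁) (hq : c₂ < f q) :
    ∃ u v, p ≤ u ∧ u ≤ v ∧ v ≤ q ∧ f u = c₁ ∧ f v = c₂ ∧
      ∀ w ∈ Set.Icc u v, c₁ ≤ f w ∧ f w ≤ c₂ := by
  set S : Set ℝ := Icc p q ∩ f ⁻¹' Iic c₁ with hS
  have hSc : IsClosed S := isClosed_Icc.inter (isClosed_Iic.preimage hf)
  have hSne : S.Nonempty := ⟨p, ⟨le_refl p, hpq⟩, hp.le⟩
  have hSbdd : BddAbove S := ⟨q, fun t ht => ht.1.2⟩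
  set u := sSup S with hu
  have huS : u ∈ S := hSc.csSup_mem hSne hSbdd
  have hpu : p ≤ u := huS.1.1
  have huq : u ≤ q := huS.1.2
  have hufle : f u ≤ c₁ := huS.2
  have hafter : ∀ t, u < t → t ≤ q → c₁ < f t := by
    intro t h1 h2
    by_contra hle
    push_neg at hle
    exact absurd (le_csSup hSbdd ⟨⟨hpu.trans h1.le, h2⟩, hle⟩) (not_le.mpr h1)
  set T : Set ℝ := Icc u q ∩ f ⁻¹' Ici c₂ with hT
  have hTc : IsClosed T := isClosed_Icc.inter (isClosed_Ici.preimage hf)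
  have hTne : T.Nonempty := ⟨q, ⟨huq, le_refl q⟩, hq.le⟩
  have hTbdd : BddBelow T := ⟨u, fun t ht => ht.1.1⟩
  set v := sInf T with hv
  have hvT : v ∈ T := hTc.csInf_mem hTne hTbdd
  have huv : u ≤ v := hvT.1.1
  have hvq : v ≤ q := hvT.1.2
  have hvfge : c₂ ≤ f v := hvT.2
  have hbefore : ∀ t, u ≤ t → t < v → f t < c₂ := by
    intro t h1 h2
    by_contra hle
    push_neg at hle
    exact absurd (csInf_le hTbdd ⟨⟨h1, h2.le.trans hvq⟩, hle⟩) (not_le.mpr h2)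
  have huv' : u < v := by
    rcases huv.lt_or_eq with h | h
    · exact h
    · exact absurd (hvfge.trans (h ▸ hufle)) (not_le.mpr hc)
  have hfu : f u = c₁ := by
    refine le_antisymm hufle ?_
    refine ge_of_tendsto (x := 𝓝[>] u) ((hf.tendsto u).mono_left nhdsWithin_le_nhds) ?_
    filter_upwards [Ioo_mem_nhdsGT_of_mem ⟨le_refl u, huv'⟩] with t ht
    exact (hafter t ht.1 (ht.2.le.trans hvq)).le
  have hfv : f v = c₂ := by
    refine le_antisymm ?_ hvfge
    refine le_of_tendsto (x := 𝓝[<] v) ((hf.tendsto v).mono_left nhdsWithin_le_nhds) ?_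
    filter_upwards [Ioo_mem_nhdsLT_of_mem ⟨huv', le_refl v⟩] with t ht
    exact (hbefore t ht.1.le ht.2).le
  refine ⟨u, v, hpu, huv, hvq, hfu, hfv, ?_⟩
  intro w hw
  constructor
  · rcases hw.1.lt_or_eq with h | h
    · exact (hafter w h (hw.2.trans hvq)).le
    · exact h ▸ hfu.ge
  · rcases hw.2.lt_or_eq with h | h
    · exact (hbefore w hw.1 h).le
    · exact h.symm ▸ hfv.le

set_option maxHeartbeats 1000000 in
/-- Part 1 of Theorem 4: at the endpoints of any connected component (α, β) of
the positivity set, the limit process Y tends to zero. -/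
theorem limit_process_vanishes_at_component_endpoints
    (Y₀ k a σ H : ℝ) (hY₀ : 0 < Y₀) (hk : 0 < k) (ha : 0 < a) (hσ : 0 < σ)
    (hH : 0 < H) (hH' : H < 1/2)
    (g : ℝ → ℝ) (hg : Continuous g) (hg0 : g 0 = 0)
    (hHolder : ∀ T : ℝ, 0 < T → ∃ C : ℝ, 0 < C ∧
      ∀ s t : ℝ, 0 ≤ s → s ≤ t → t ≤ T → |g t - g s| ≤ C * (t - s) ^ (H / 2))
    (Y : ℝ → ℝ → ℝ) (Ylim : ℝ → ℝ)
    (hYc : ∀ ε : ℝ, 0 < ε → Continuous (Y ε))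
    (hYeq : ∀ ε : ℝ, 0 < ε → ∀ t : ℝ, 0 ≤ t →
      Y ε t = Y₀ + (∫ s in (0:ℝ)..t, k / ((if 0 < Y ε s then Y ε s else 0) + ε))
        - a * (∫ s in (0:ℝ)..t, Y ε s) + σ * g t)
    (hlim : ∀ t : ℝ, 0 ≤ t →
      Tendsto (fun ε => Y ε t) (𝓝[>] 0) (𝓝 (Ylim t)))
    (α β : ℝ) (hα : 0 ≤ α) (hαβ : α < β)
    (hpos : ∀ t ∈ Set.Ioo α β, 0 < Ylim t)
    (hαend : Ylim α ≤ 0) (hβend : Ylim β ≤ 0) :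
    Tendsto Ylim (𝓝[>] α) (𝓝 0) ∧ Tendsto Ylim (𝓝[<] β) (𝓝 0) := by
  have hβpos : 0 < β := lt_of_le_of_lt hα hαβ
  obtain ⟨C, hCpos, hCb⟩ := hHolder β hβpos
  have hif : ∀ y : ℝ, (if 0 < y then y else 0) = max y 0 := by
    intro y; split_ifs with h
    · exact (max_eq_left h.le).symm
    · exact (max_eq_right (not_lt.mp h)).symm
  have hcont : ∀ ε : ℝ, 0 < ε →
      Continuous (fun s => k / ((if 0 < Y ε s then Y ε s else 0) + ε)) := by
    intro ε hε
    simp only [hif]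
    refine continuous_const.div (((hYc ε hε).max continuous_const).add continuous_const) ?_
    intro s
    have h0 : (0:ℝ) ≤ max (Y ε s) 0 := le_max_right _ _
    exact ne_of_gt (by linarith)
  have key : ∀ ε : ℝ, 0 < ε → ∀ s t : ℝ, 0 ≤ s → s ≤ t →
      Y ε t - Y ε s = (∫ u in s..t, k / ((if 0 < Y ε u then Y ε u else 0) + ε))
        - a * (∫ u in s..t, Y ε u) + σ * (g t - g s) := by
    intro ε hε s t hs hst
    have ht : 0 ≤ t := hs.trans hst
    have h1 := hYeq ε hε s hs
    have h2 := hYeq ε hε t ht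
    have i1 : IntervalIntegrable (fun u => k / ((if 0 < Y ε u then Y ε u else 0) + ε))
        volume 0 s := (hcont ε hε).intervalIntegrable _ _
    have i2 : IntervalIntegrable (fun u => k / ((if 0 < Y ε u then Y ε u else 0) + ε))
        volume s t := (hcont ε hε).intervalIntegrable _ _
    have i3 : IntervalIntegrable (Y ε) volume 0 s := (hYc ε hε).intervalIntegrable _ _
    have i4 : IntervalIntegrable (Y ε) volume s t := (hYc ε hε).intervalIntegrable _ _
    have e1 := intervalIntegral.integral_add_adjacent_intervals i1 i2
    have e2 := intervalIntegral.integral_add_adjacent_intervals i3 i4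
    rw [h1, h2, ← e1, ← e2]; ring
  -- combined increment estimate: if x/4 ≤ m ≤ Y ε ≤ M on [s,t]
  have estim : ∀ ε : ℝ, 0 < ε → ∀ s t m M : ℝ, 0 ≤ s → s ≤ t → 0 < m →
      (∀ u ∈ Icc s t, m ≤ Y ε u ∧ Y ε u ≤ M) →
      Y ε t - Y ε s ≤ k / m * (t - s) + σ * (g t - g s) ∧
      -(a * M) * (t - s) + σ * (g t - g s) ≤ Y ε t - Y ε s := by
    intro ε hε s t m M hs hst hm hbd
    have hdrift_le : (∫ u in s..t, k / ((if 0 < Y ε u then Y ε u else 0) + ε))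
        ≤ k / m * (t - s) := by
      have h := intervalIntegral.integral_mono_on hst ((hcont ε hε).intervalIntegrable _ _)
        (intervalIntegrable_const (c := k / m) (μ := volume)) ?_
      · rw [intervalIntegral.integral_const, smul_eq_mul] at h
        linarith [h]
      · intro u hu
        rw [hif]
        have h1 : m ≤ max (Y ε u) 0 := le_max_of_le_left (hbd u hu).1
        gcongr <;> linarith
    have hdrift_ge : 0 ≤ (∫ u in s..t, k / ((if 0 < Y ε u then Y ε u else 0) + ε)) := by
      refine intervalIntegral.integral_nonneg hst ?_
      intro u hu
      rw [hif]
      have h0 : (0:ℝ) ≤ max (Y ε u) 0 := le_max_right _ _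
      positivity
    have hY_le : (∫ u in s..t, Y ε u) ≤ M * (t - s) := by
      have h := intervalIntegral.integral_mono_on hst ((hYc ε hε).intervalIntegrable _ _)
        (intervalIntegrable_const (c := M) (μ := volume)) (fun u hu => (hbd u hu).2)
      rw [intervalIntegral.integral_const, smul_eq_mul] at h
      linarith [h]
    have hY_ge : m * (t - s) ≤ (∫ u in s..t, Y ε u) := by
      have h := intervalIntegral.integral_mono_on hst (intervalIntegrable_const (c := m) (μ := volume))
        ((hYc ε hε).intervalIntegrable _ _) (fun u hu => (hbd u hu).1)
      rw [intervalIntegral.integral_const, smul_eq_mul] at h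
      linarith [h]
    have hts : 0 ≤ t - s := by linarith
    have hmts : 0 ≤ m * (t - s) := mul_nonneg hm.le hts
    have hkey := key ε hε s t hs hst
    constructor
    · have haB : 0 ≤ a * (∫ u in s..t, Y ε u) := by nlinarith
      linarith
    · have haB : a * (∫ u in s..t, Y ε u) ≤ a * (M * (t - s)) :=
        mul_le_mul_of_nonneg_left hY_le ha.le
      nlinarith
  -- limit of the bounding function
  have htend : ∀ c : ℝ, Tendsto (fun δ : ℝ => c * δ + σ * (C * δ ^ (H / 2)))
      (𝓝[>] (0:ℝ)) (𝓝 0) := by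
    intro c
    have hpow : Tendsto (fun δ : ℝ => δ ^ (H / 2)) (𝓝[>] (0:ℝ)) (𝓝 0) := by
      have hca : ContinuousAt (fun δ : ℝ => δ ^ (H / 2)) 0 :=
        Real.continuousAt_rpow_const 0 (H / 2) (Or.inr (by positivity))
      have h := hca.tendsto.mono_left (nhdsWithin_le_nhds (s := Set.Ioi (0:ℝ)))
      rwa [Real.zero_rpow (by positivity : H / 2 ≠ 0)] at h
    have h1 : Tendsto (fun δ : ℝ => c * δ) (𝓝[>] (0:ℝ)) (𝓝 0) := by
      have h : Tendsto (fun δ : ℝ => c * δ) (𝓝 (0:ℝ)) (𝓝 (c * 0)) :=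
        tendsto_id.const_mul c
      rw [mul_zero] at h
      exact h.mono_left (nhdsWithin_le_nhds (s := Set.Ioi (0:ℝ)))
    have h2 : Tendsto (fun δ : ℝ => σ * (C * δ ^ (H / 2))) (𝓝[>] (0:ℝ)) (𝓝 0) := by
      have h := (hpow.const_mul C).const_mul σ
      simpa using h
    simpa using h1.add h2
  constructor
  · -- left endpoint α
    by_contra hcon
    rw [Metric.tendsto_nhds] at hcon
    push_neg at hcon
    obtain ⟨x, hx, hfreq⟩ := hcon
    have main : ∀ δ : ℝ, 0 < δ → δ ≤ β - α →
        x / 4 ≤ 4 * k / x * δ + σ * (C * δ ^ (H / 2)) := by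
      intro δ hδ hδβ
      have hmem : Ioo α (α + δ) ∈ 𝓝[>] α :=
        Ioo_mem_nhdsGT_of_mem ⟨le_refl α, by linarith⟩
      have hevmem : ∀ᶠ t in 𝓝[>] α, t ∈ Ioo α (α + δ) := hmem
      obtain ⟨τ, hτd, hτmem⟩ := (hfreq.and_eventually hevmem).exists
      have hτβ : τ < β := by have := hτmem.2; linarith
      have hYτpos := hpos τ ⟨hτmem.1, hτβ⟩
      have hxτ : x ≤ Ylim τ := by
        rw [Real.dist_0_eq_abs, abs_of_pos hYτpos] at hτd
        exact hτd
      have hτ0 : 0 ≤ τ := hα.trans hτmem.1.le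
      have hev1 : ∀ᶠ ε in 𝓝[>] (0:ℝ), Y ε α < x / 4 :=
        (hlim α hα).eventually_lt_const (by linarith)
      have hev2 : ∀ᶠ ε in 𝓝[>] (0:ℝ), x / 2 < Y ε τ :=
        (hlim τ hτ0).eventually_const_lt (by linarith)
      obtain ⟨ε, hε1, hε2, hε⟩ := (hev1.and (hev2.and self_mem_nhdsWithin)).exists
      obtain ⟨u, v, hu1, huv, hv1, hfu, hfv, hbd⟩ :=
        crossing_up (hYc ε hε) hτmem.1.le (by linarith : x / 4 < x / 2) hε1 hε2
      have hu0 : 0 ≤ u := hα.trans hu1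
      have est := (estim ε hε u v (x / 4) (x / 2) hu0 huv (by linarith) hbd).1
      have hvβ : v ≤ β := hv1.trans hτβ.le
      have hgb : |g v - g u| ≤ C * (v - u) ^ (H / 2) := hCb u v hu0 huv hvβ
      have hvu : v - u ≤ δ := by have := hτmem.2; linarith
      have hpow : (v - u) ^ (H / 2) ≤ δ ^ (H / 2) :=
        Real.rpow_le_rpow (by linarith) hvu (by positivity)
      have h1 : Y ε v - Y ε u = x / 4 := by rw [hfu, hfv]; ring
      have h2 : k / (x / 4) * (v - u) ≤ 4 * k / x * δ := by
        rw [show k / (x / 4) = 4 * k / x by field_simp]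
        exact mul_le_mul_of_nonneg_left hvu (by positivity)
      have h3 : σ * (g v - g u) ≤ σ * (C * δ ^ (H / 2)) := by
        have h3a : g v - g u ≤ C * δ ^ (H / 2) :=
          le_trans (le_of_abs_le hgb) (mul_le_mul_of_nonneg_left hpow hCpos.le)
        exact mul_le_mul_of_nonneg_left h3a hσ.le
      linarith
    have hfin : x / 4 ≤ 0 := by
      refine ge_of_tendsto (htend (4 * k / x)) ?_
      filter_upwards [Ioo_mem_nhdsGT_of_mem
        (show (0:ℝ) ∈ Ico 0 (β - α) from ⟨le_refl 0, by linarith⟩)] with δ hδ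
      exact main δ hδ.1 hδ.2.le
    linarith
  · -- right endpoint β
    by_contra hcon
    rw [Metric.tendsto_nhds] at hcon
    push_neg at hcon
    obtain ⟨x, hx, hfreq⟩ := hcon
    have main : ∀ δ : ℝ, 0 < δ → δ ≤ β - α →
        x / 4 ≤ a * (x / 2) * δ + σ * (C * δ ^ (H / 2)) := by
      intro δ hδ hδβ
      have hmem : Ioo (β - δ) β ∈ 𝓝[<] β :=
        Ioo_mem_nhdsLT_of_mem ⟨by linarith, le_refl β⟩
      have hevmem : ∀ᶠ t in 𝓝[<] β, t ∈ Ioo (β - δ) β := hmem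
      obtain ⟨τ, hτd, hτmem⟩ := (hfreq.and_eventually hevmem).exists
      have hατ : α < τ := by have := hτmem.1; linarith
      have hYτpos := hpos τ ⟨hατ, hτmem.2⟩
      have hxτ : x ≤ Ylim τ := by
        rw [Real.dist_0_eq_abs, abs_of_pos hYτpos] at hτd
        exact hτd
      have hτ0 : 0 ≤ τ := hα.trans hατ.le
      have hev1 : ∀ᶠ ε in 𝓝[>] (0:ℝ), Y ε β < x / 4 :=
        (hlim β hβpos.le).eventually_lt_const (by linarith)
      have hev2 : ∀ᶠ ε in 𝓝[>] (0:ℝ), x / 2 < Y ε τ :=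
        (hlim τ hτ0).eventually_const_lt (by linarith)
      obtain ⟨ε, hε1, hε2, hε⟩ := (hev1.and (hev2.and self_mem_nhdsWithin)).exists
      have hfc : Continuous (fun t : ℝ => Y ε (τ + β - t)) :=
        (hYc ε hε).comp (continuous_const.sub continuous_id)
      have hp' : (fun t : ℝ => Y ε (τ + β - t)) τ < x / 4 := by
        show Y ε (τ + β - τ) < x / 4
        rw [show τ + β - τ = β by ring]; exact hε1
      have hq' : x / 2 < (fun t : ℝ => Y ε (τ + β - t)) β := by
        show x / 2 < Y ε (τ + β - β)
        rw [show τ + β - β = τ by ring]; exact hε2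
      obtain ⟨u, v, hu1, huv, hv1, hfu, hfv, hbd⟩ :=
        crossing_up hfc hτmem.2.le (by linarith : x / 4 < x / 2) hp' hq'
      -- translate back: u' = τ + β - v, v' = τ + β - u
      have hYv' : Y ε (τ + β - u) = x / 4 := hfu
      have hYu' : Y ε (τ + β - v) = x / 2 := hfv
      have hτu' : τ ≤ τ + β - v := by linarith [hv1]
      have hu'v' : τ + β - v ≤ τ + β - u := by linarith
      have hv'β : τ + β - u ≤ β := by linarith [hu1]
      have hu'0 : 0 ≤ τ + β - v := le_trans hτ0 hτu'
      have hbd' : ∀ w ∈ Icc (τ + β - v) (τ + β - u),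
          x / 4 ≤ Y ε w ∧ Y ε w ≤ x / 2 := by
        intro w hw
        have hmem2 : τ + β - w ∈ Icc u v := ⟨by linarith [hw.2], by linarith [hw.1]⟩
        have h := hbd (τ + β - w) hmem2
        have ha1 : x / 4 ≤ Y ε (τ + β - (τ + β - w)) := h.1
        have ha2 : Y ε (τ + β - (τ + β - w)) ≤ x / 2 := h.2
        rw [show τ + β - (τ + β - w) = w by ring] at ha1 ha2
        exact ⟨ha1, ha2⟩
      have est := (estim ε hε (τ + β - v) (τ + β - u) (x / 4) (x / 2)
        hu'0 hu'v' (by linarith) hbd').2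
      have hgb : |g (τ + β - u) - g (τ + β - v)| ≤ C * ((τ + β - u) - (τ + β - v)) ^ (H / 2) :=
        hCb _ _ hu'0 hu'v' hv'β
      have hvu : (τ + β - u) - (τ + β - v) ≤ δ := by
        have := hτmem.1; linarith [hu1, hv1]
      have hpow : ((τ + β - u) - (τ + β - v)) ^ (H / 2) ≤ δ ^ (H / 2) :=
        Real.rpow_le_rpow (by linarith) hvu (by positivity)
      have h1 : Y ε (τ + β - u) - Y ε (τ + β - v) = -(x / 4) := by
        rw [hYv', hYu']; ring
      have h2 : a * (x / 2) * ((τ + β - u) - (τ + β - v)) ≤ a * (x / 2) * δ :=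
        mul_le_mul_of_nonneg_left hvu (by positivity)
      have h3 : -(g (τ + β - u) - g (τ + β - v)) ≤ C * δ ^ (H / 2) := by
        have := (abs_le.mp hgb).1
        have h3b := mul_le_mul_of_nonneg_left hpow hCpos.le
        linarith
      have h4 : σ * (-(g (τ + β - u) - g (τ + β - v))) ≤ σ * (C * δ ^ (H / 2)) :=
        mul_le_mul_of_nonneg_left h3 hσ.le
      linarith [est, h1, h2, h4]
    have hfin : x / 4 ≤ 0 := by
      refine ge_of_tendsto (htend (a * (x / 2))) ?_
      filter_upwards [Ioo_mem_nhdsGT_of_mem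
        (show (0:ℝ) ∈ Ico 0 (β - α) from ⟨le_refl 0, by linarith⟩)] with δ hδ
      exact main δ hδ.1 hδ.2.le
    linarith
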